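/- (Twisted differential squares to zero.) With K^i as above satisfying the identity of the previous lemma, for every m ≥ 0 one has Σ_{s=0}^m (−1)^s K^{m−s} K^s = 0. Consequently, δ = Σ_s (−1)^p K^s defines a differential (δδ = 0) on the total complex TP_k = ⊕_{p+q=k} P_{p,q}. -/

import Mathlib

section
variable (R : Type) [Ring R] (P T : Type) [AddCommGroup P] [AddCommGroup T]
  [Module R P] [Module R T]

/-- `F^k = (L d)^k f`. -/
def Fpow (f : P →ₗ[R] T) (d L : T →ₗ[R] T) : ℕ → (P →ₗ[R] T)
  | 0 => f
  | k + 1 => L ∘ₗ d ∘ₗ Fpow f d L k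

/-- `K^0 = ∂`, `K^i = g d F^{i-1}` for `i ≥ 1`. -/
def Kmap (f : P →ₗ[R] T) (d L : T →ₗ[R] T) (g : T →ₗ[R] P) (dP : P →ₗ[R] P) :
    ℕ → (P →ₗ[R] P)
  | 0 => dP
  | i + 1 => g ∘ₗ d ∘ₗ Fpow R P T f d L i

/-- `F^{k-1}` with the convention `F^{-1} = 0`. -/
def Fm1 (f : P →ₗ[R] T) (d L : T →ₗ[R] T) : ℕ → (P →ₗ[R] T)
  | 0 => 0
  | k + 1 => Fpow R P T f d L k

section helpers
variable {M N Q : Type} [AddCommGroup M] [AddCommGroup N] [AddCommGroup Q]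
  [Module R M] [Module R N] [Module R Q]

lemma mycomp_sub (A : N →ₗ[R] Q) (B C : M →ₗ[R] N) :
    A ∘ₗ (B - C) = A ∘ₗ B - A ∘ₗ C := by ext x; simp

lemma mycomp_zsmul (A : N →ₗ[R] Q) (c : ℤ) (B : M →ₗ[R] N) :
    A ∘ₗ (c • B) = c • (A ∘ₗ B) := by ext x; simp

lemma mycomp_sum {ι : Type} (A : N →ₗ[R] Q) (s : Finset ι) (B : ι → (M →ₗ[R] N)) :
    A ∘ₗ (∑ i ∈ s, B i) = ∑ i ∈ s, A ∘ₗ B i := by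
  ext x; simp [LinearMap.sum_apply]
end helpers

/-- Key identity: `dT F^k = Σ_{s=0}^k (−1)^{k−s} F^{k−s} K^s − d F^{k−1}`. -/
lemma dT_comp_Fpow
    (f : P →ₗ[R] T) (g : T →ₗ[R] P) (d L dT : T →ₗ[R] T) (dP : P →ₗ[R] P)
    (hdd : d ∘ₗ d = 0) (hcomm : dT ∘ₗ d = d ∘ₗ dT)
    (hf : dT ∘ₗ f = f ∘ₗ dP)
    (hL : dT ∘ₗ L + L ∘ₗ dT = f ∘ₗ g - LinearMap.id) :
    ∀ k : ℕ, dT ∘ₗ Fpow R P T f d L k =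
      (∑ s ∈ Finset.range (k + 1),
        ((-1 : ℤ) ^ (k - s)) • (Fpow R P T f d L (k - s) ∘ₗ Kmap R P T f d L g dP s))
      - d ∘ₗ Fm1 R P T f d L k := by
  intro k
  induction k with
  | zero => simp [Fpow, Kmap, Fm1, hf]
  | succ k ih =>
    have hdtl : dT ∘ₗ L = f ∘ₗ g - LinearMap.id - L ∘ₗ dT := by
      rw [eq_sub_iff_add_eq]; exact hL
    have h1 : dT ∘ₗ Fpow R P T f d L (k + 1)
        = (f ∘ₗ g) ∘ₗ (d ∘ₗ Fpow R P T f d L k) - d ∘ₗ Fpow R P T f d L k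
          - L ∘ₗ (d ∘ₗ (dT ∘ₗ Fpow R P T f d L k)) := by
      have : dT ∘ₗ Fpow R P T f d L (k + 1)
          = (dT ∘ₗ L) ∘ₗ (d ∘ₗ Fpow R P T f d L k) := by
        show dT ∘ₗ (L ∘ₗ (d ∘ₗ Fpow R P T f d L k)) = _
        rw [LinearMap.comp_assoc]
      rw [this, hdtl, LinearMap.sub_comp, LinearMap.sub_comp, LinearMap.id_comp]
      congr 1
      ext x
      have := LinearMap.ext_iff.mp hcomm (Fpow R P T f d L k x)
      simp at this ⊢
      rw [this]
    rw [h1, ih]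
    rw [mycomp_sub, mycomp_sub, mycomp_sum, mycomp_sum]
    have hz : L ∘ₗ (d ∘ₗ (d ∘ₗ Fm1 R P T f d L k)) = 0 := by
      ext x
      have := LinearMap.ext_iff.mp hdd (Fm1 R P T f d L k x)
      simp at this ⊢
      rw [this]; simp
    rw [hz, sub_zero]
    -- RHS: peel off the `s = k+1` term
    conv_rhs => rw [Finset.sum_range_succ]
    have hlast : ((-1 : ℤ) ^ (k + 1 - (k + 1))) •
        (Fpow R P T f d L (k + 1 - (k + 1)) ∘ₗ Kmap R P T f d L g dP (k + 1))
        = (f ∘ₗ g) ∘ₗ (d ∘ₗ Fpow R P T f d L k) := by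
      simp only [Nat.sub_self, pow_zero, one_smul]
      ext x
      simp [Fpow, Kmap]
    rw [hlast]
    have hFm1 : Fm1 R P T f d L (k + 1) = Fpow R P T f d L k := rfl
    rw [hFm1]
    have hsum : ∑ s ∈ Finset.range (k + 1),
        L ∘ₗ (d ∘ₗ ((-1 : ℤ) ^ (k - s) •
          (Fpow R P T f d L (k - s) ∘ₗ Kmap R P T f d L g dP s)))
        = - ∑ s ∈ Finset.range (k + 1), ((-1 : ℤ) ^ (k + 1 - s)) •
          (Fpow R P T f d L (k + 1 - s) ∘ₗ Kmap R P T f d L g dP s) := by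
      rw [← Finset.sum_neg_distrib]
      apply Finset.sum_congr rfl
      intro s hs
      have hsle : s ≤ k := Nat.lt_succ_iff.mp (Finset.mem_range.mp hs)
      have h2 : k + 1 - s = (k - s) + 1 := by omega
      rw [mycomp_zsmul, mycomp_zsmul, h2]
      have h3 : Fpow R P T f d L (k - s + 1)
          = L ∘ₗ (d ∘ₗ Fpow R P T f d L (k - s)) := rfl
      have h4 : L ∘ₗ (d ∘ₗ (Fpow R P T f d L (k - s) ∘ₗ Kmap R P T f d L g dP s))
          = Fpow R P T f d L (k - s + 1) ∘ₗ Kmap R P T f d L g dP s := by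
        rw [h3, LinearMap.comp_assoc, LinearMap.comp_assoc]
      rw [h4, pow_succ]
      rw [← neg_smul]
      ring_nf
    rw [hsum]
    abel

/-- twisted differential squares to zero: with `K^0 = ∂` (`∂∂ = 0`),
`K^i = g d F^{i-1}`, `F^k = (Ld)^k f`, `∂L + L∂ = fg − 1`, `dd = 0`, `∂d = d∂`, and
`f`, `g` chain maps, one has `Σ_{s=0}^m (−1)^s K^{m−s} K^s = 0` for every `m ≥ 0`;
this is exactly the statement that the twisted differential `δ = Σ_s (−1)^p K^s` on the
total complex `TP_k = ⊕_{p+q=k} P_{p,q}` squares to zero. -/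
theorem twisted_differential_squares_zero
    (f : P →ₗ[R] T) (g : T →ₗ[R] P) (d L dT : T →ₗ[R] T) (dP : P →ₗ[R] P)
    (hdd : d ∘ₗ d = 0) (hTT : dT ∘ₗ dT = 0) (hPP : dP ∘ₗ dP = 0)
    (hcomm : dT ∘ₗ d = d ∘ₗ dT)
    (hf : dT ∘ₗ f = f ∘ₗ dP) (hg : dP ∘ₗ g = g ∘ₗ dT)
    (hL : dT ∘ₗ L + L ∘ₗ dT = f ∘ₗ g - LinearMap.id) :
    ∀ m : ℕ, ∑ s ∈ Finset.range (m + 1),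
      ((-1 : ℤ) ^ s) • (Kmap R P T f d L g dP (m - s) ∘ₗ Kmap R P T f d L g dP s) = 0 := by
  have key := dT_comp_Fpow R P T f g d L dT dP hdd hcomm hf hL
  intro m
  cases m with
  | zero =>
    rw [show (0 : ℕ) + 1 = 1 from rfl, Finset.sum_range_one]
    simpa [Kmap] using hPP
  | succ n =>
    rw [Finset.sum_range_succ]
    have hlast : ((-1 : ℤ) ^ (n + 1)) •
        (Kmap R P T f d L g dP (n + 1 - (n + 1)) ∘ₗ Kmap R P T f d L g dP (n + 1))
        = - ∑ s ∈ Finset.range (n + 1), ((-1 : ℤ) ^ s) •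
            (Kmap R P T f d L g dP (n + 1 - s) ∘ₗ Kmap R P T f d L g dP s) := by
      have e1 : Kmap R P T f d L g dP (n + 1 - (n + 1)) ∘ₗ Kmap R P T f d L g dP (n + 1)
          = g ∘ₗ (d ∘ₗ (dT ∘ₗ Fpow R P T f d L n)) := by
        simp only [Nat.sub_self]
        show dP ∘ₗ (g ∘ₗ (d ∘ₗ Fpow R P T f d L n)) = _
        ext x
        have h1 := LinearMap.ext_iff.mp hg (d (Fpow R P T f d L n x))
        have h2 := LinearMap.ext_iff.mp hcomm (Fpow R P T f d L n x)
        simp at h1 h2 ⊢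
        rw [h1, h2]
      rw [e1, key n, mycomp_sub, mycomp_sub, mycomp_sum, mycomp_sum]
      have hz : g ∘ₗ (d ∘ₗ (d ∘ₗ Fm1 R P T f d L n)) = 0 := by
        ext x
        have := LinearMap.ext_iff.mp hdd (Fm1 R P T f d L n x)
        simp at this ⊢
        rw [this]; simp
      rw [hz, sub_zero, Finset.smul_sum, ← Finset.sum_neg_distrib]
      apply Finset.sum_congr rfl
      intro s hs
      have hsle : s ≤ n := Nat.lt_succ_iff.mp (Finset.mem_range.mp hs)
      rw [mycomp_zsmul, mycomp_zsmul]
      have h4 : g ∘ₗ (d ∘ₗ (Fpow R P T f d L (n - s) ∘ₗ Kmap R P T f d L g dP s))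
          = Kmap R P T f d L g dP (n + 1 - s) ∘ₗ Kmap R P T f d L g dP s := by
        have h5 : n + 1 - s = (n - s) + 1 := by omega
        rw [h5]
        show _ = (g ∘ₗ (d ∘ₗ Fpow R P T f d L (n - s))) ∘ₗ Kmap R P T f d L g dP s
        rw [LinearMap.comp_assoc, LinearMap.comp_assoc]
      rw [h4, smul_smul, ← neg_smul]
      congr 1
      have h6 : (n + 1) + (n - s) = 2 * (n - s) + (s + 1) := by omega
      rw [← pow_add, h6, pow_add, pow_mul]
      simp [pow_succ]
    rw [hlast]
    abel

end
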